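/- Let A be an additive category in which idempotents split, and let e₁, e₂, u be objects such that u is indecomposable with local endomorphism ring and u is a direct summand of e₁ ⊕ e₂. Then u is a direct summand of e₁ or a direct summand of e₂. -/
import Mathlib


open CategoryTheory CategoryTheory.Limits

/-- In an idempotent complete additive category, an indecomposable object with
local endomorphism ring which is a direct summand of a biproduct `e₁ ⊞ e₂` is a
direct summand of `e₁` or of `e₂`. -/
theorem stmt11 {C : Type*} [Category C] [Preadditive C] [HasBinaryBiproducts C]
    [IsIdempotentComplete C] (e₁ e₂ u : C)
    (hu_ne : ¬ IsZero u)
    (hu_ind : ∀ (a b : C), (u ≅ a ⊞ b) → IsZero a ∨ IsZero b)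
    (hu_local : IsLocalRing (End u))
    (hsummand : ∃ (s : u ⟶ e₁ ⊞ e₂) (r : e₁ ⊞ e₂ ⟶ u), s ≫ r = 𝟙 u) :
    (∃ (s : u ⟶ e₁) (r : e₁ ⟶ u), s ≫ r = 𝟙 u) ∨
    (∃ (s : u ⟶ e₂) (r : e₂ ⟶ u), s ≫ r = 𝟙 u) := by
  obtain ⟨s, r, hsr⟩ := hsummand
  set a : End u := s ≫ biprod.fst ≫ biprod.inl ≫ r with ha
  set b : End u := s ≫ biprod.snd ≫ biprod.inr ≫ r with hb
  have hab : a + b = (1 : End u) := by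
    show a + b = 𝟙 u
    rw [ha, hb]
    have key : biprod.fst ≫ biprod.inl ≫ r + biprod.snd ≫ biprod.inr ≫ r = r := by
      simp only [← Category.assoc, ← Preadditive.add_comp, biprod.total, Category.id_comp]
    rw [← Preadditive.comp_add, key, hsr]
  have := IsLocalRing.isUnit_or_isUnit_of_add_one hab
  rcases this with h | h
  · left
    obtain ⟨v, hv⟩ := h
    refine ⟨s ≫ biprod.fst, (biprod.inl ≫ r) ≫ (↑v⁻¹ : End u), ?_⟩
    have h1 : a ≫ (↑v⁻¹ : End u) = 𝟙 u := by
      have : (↑v⁻¹ : End u) * a = 1 := by rw [← hv]; exact v.inv_mul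
      simpa [End.mul_def] using this
    calc (s ≫ biprod.fst) ≫ (biprod.inl ≫ r) ≫ (↑v⁻¹ : End u)
        = a ≫ (↑v⁻¹ : End u) := by rw [ha]; simp
      _ = 𝟙 u := h1
  · right
    obtain ⟨v, hv⟩ := h
    refine ⟨s ≫ biprod.snd, (biprod.inr ≫ r) ≫ (↑v⁻¹ : End u), ?_⟩
    have h1 : b ≫ (↑v⁻¹ : End u) = 𝟙 u := by
      have : (↑v⁻¹ : End u) * b = 1 := by rw [← hv]; exact v.inv_mul
      simpa [End.mul_def] using this
    calc (s ≫ biprod.snd) ≫ (biprod.inr ≫ r) ≫ (↑v⁻¹ : End u)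
        = b ≫ (↑v⁻¹ : End u) := by rw [hb]; simp
      _ = 𝟙 u := h1
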